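/- arXiv:1207.5748 — 3 statements merged into one kernel-verified Lean document; each statement's English description precedes it below -/
import Mathlib

section
/- Let λ = (λ_1 ≥ … ≥ λ_l > 0) be a partition, d ≥ 2 and k ≥ λ_1 integers with kd − |λ| ≥ λ_1 (so that (kd − |λ|, λ_1, …, λ_l) is a partition). Then the number of semistandard Young tableaux of shape (kd − |λ|, λ_1, …, λ_l) in which each value i ∈ {1,…,d} occurs exactly k times equals the number of semistandard Young tableaux of shape λ with entries in {1,…,d−1}. (The bijection removes the first row and subtracts 1 from every remaining entry.) -/
/-- A semistandard Young tableau of shape `μ` (the shape is given by the row-length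
function `μ : ℕ → ℕ`, rows and columns being 0-indexed): entries are positive integers,
vanish outside the diagram (a normalization), are weakly increasing along each row and
strictly increasing down each column. -/
def IsSSYT (μ : ℕ → ℕ) (T : ℕ → ℕ → ℕ) : Prop :=
  (∀ r c, c < μ r → 1 ≤ T r c) ∧
  (∀ r c, μ r ≤ c → T r c = 0) ∧
  (∀ r c c', c ≤ c' → c' < μ r → T r c ≤ T r c') ∧
  (∀ r r' c, r < r' → c < μ r' → T r c < T r' c)

/-- The shape `(kd − |λ|, λ_1, …, λ_l)` obtained from the partition `λ` (encoded by the
row-length function `lam`) by adding a first row of length `kd − |λ|`. -/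
def shape (k d l : ℕ) (lam : ℕ → ℕ) : ℕ → ℕ :=
  fun r => if r = 0 then k * d - ∑ i ∈ Finset.range l, lam i else lam (r - 1)

set_option linter.unusedSectionVars false
set_option linter.unusedVariables false

namespace Stmt7

/-- number of entries `≤ v` in a tableau of shape `lam` (entry = T r c + 1 convention NOT used;
here `T` is the lower-rows tableau whose cell values are `T r c + 1`). -/
def cntLe (l : ℕ) (lam : ℕ → ℕ) (T : ℕ → ℕ → ℕ) (v : ℕ) : ℕ :=
  ∑ r ∈ Finset.range l, ((Finset.range (lam r)).filter fun c => T r c + 1 ≤ v).card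

def cntEq (l : ℕ) (lam : ℕ → ℕ) (T : ℕ → ℕ → ℕ) (v : ℕ) : ℕ :=
  ∑ r ∈ Finset.range l, ((Finset.range (lam r)).filter fun c => T r c + 1 = v).card

def Arow (k l : ℕ) (lam : ℕ → ℕ) (T : ℕ → ℕ → ℕ) (v : ℕ) : ℕ := v * k - cntLe l lam T v

section
variable {k d l : ℕ} {lam : ℕ → ℕ} {T : ℕ → ℕ → ℕ}

lemma entry_ge (hanti : Antitone lam) (hT : IsSSYT lam T) :
    ∀ r c, c < lam r → r + 1 ≤ T r c := by
  intro r
  induction r with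
  | zero => exact fun c hc => hT.1 0 c hc
  | succ n ih =>
    intro c hc
    have h1 : c < lam n := lt_of_lt_of_le hc (hanti (Nat.le_succ n))
    have h2 := hT.2.2.2 n (n+1) c (Nat.lt_succ_self n) hc
    have := ih c h1
    omega

lemma cntLe_le (hanti : Antitone lam) (hk : lam 0 ≤ k) (hT : IsSSYT lam T) (v : ℕ) :
    cntLe l lam T v ≤ (v - 1) * k := by
  have hterm : ∀ r ∈ Finset.range l,
      ((Finset.range (lam r)).filter fun c => T r c + 1 ≤ v).card ≤
        if r + 2 ≤ v then k else 0 := by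
    intro r _
    by_cases h : r + 2 ≤ v
    · simp only [h, if_true]
      calc ((Finset.range (lam r)).filter fun c => T r c + 1 ≤ v).card
          ≤ (Finset.range (lam r)).card := Finset.card_filter_le _ _
        _ = lam r := Finset.card_range _
        _ ≤ lam 0 := hanti (Nat.zero_le r)
        _ ≤ k := hk
    · simp only [h, if_false, Nat.le_zero, Finset.card_eq_zero, Finset.filter_eq_empty_iff]
      intro c hc
      simp only [Finset.mem_range] at hc
      have := entry_ge hanti hT r c hc
      omega
  calc cntLe l lam T v ≤ ∑ r ∈ Finset.range l, if r + 2 ≤ v then k else 0 :=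
        Finset.sum_le_sum hterm
    _ = ∑ r ∈ (Finset.range l).filter (fun r => r + 2 ≤ v), k := by
        rw [Finset.sum_filter]
    _ = ((Finset.range l).filter (fun r => r + 2 ≤ v)).card * k := by
        rw [Finset.sum_const, smul_eq_mul]
    _ ≤ (v - 1) * k := by
        apply Nat.mul_le_mul_right
        calc ((Finset.range l).filter (fun r => r + 2 ≤ v)).card
            ≤ (Finset.range (v-1)).card := by
              apply Finset.card_le_card
              intro x hx
              simp only [Finset.mem_filter, Finset.mem_range] at hx ⊢
              omega
          _ = v - 1 := Finset.card_range _

lemma cntEq_le (hanti : Antitone lam) (hT : IsSSYT lam T) (v : ℕ) :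
    cntEq l lam T v ≤ lam 0 := by
  classical
  have hdisj : ∀ r ∈ Finset.range l, ∀ r' ∈ Finset.range l, r ≠ r' →
      Disjoint ((Finset.range (lam r)).filter fun c => T r c + 1 = v)
        ((Finset.range (lam r')).filter fun c => T r' c + 1 = v) := by
    intro r _ r' _ hne
    rw [Finset.disjoint_left]
    intro c hc hc'
    simp only [Finset.mem_filter, Finset.mem_range] at hc hc'
    rcases Nat.lt_or_ge r r' with h | h
    · have := hT.2.2.2 r r' c h hc'.1; omega
    · have hlt : r' < r := by omega
      have := hT.2.2.2 r' r c hlt hc.1; omega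
  calc cntEq l lam T v
      = ((Finset.range l).biUnion fun r =>
          (Finset.range (lam r)).filter fun c => T r c + 1 = v).card :=
        (Finset.card_biUnion hdisj).symm
    _ ≤ (Finset.range (lam 0)).card := by
        apply Finset.card_le_card
        intro x hx
        simp only [Finset.mem_biUnion, Finset.mem_filter, Finset.mem_range] at hx ⊢
        obtain ⟨r, _, hx, _⟩ := hx
        exact lt_of_lt_of_le hx (hanti (Nat.zero_le r))
    _ = lam 0 := Finset.card_range _

lemma cntLe_succ (v : ℕ) :
    cntLe l lam T (v+1) = cntLe l lam T v + cntEq l lam T (v+1) := by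
  classical
  unfold cntLe cntEq
  rw [← Finset.sum_add_distrib]
  apply Finset.sum_congr rfl
  intro r _
  rw [← Finset.card_union_of_disjoint]
  · congr 1
    ext c
    simp only [Finset.mem_union, Finset.mem_filter, Finset.mem_range]
    omega
  · rw [Finset.disjoint_left]
    intro c hc hc'
    simp only [Finset.mem_filter] at hc hc'
    omega

lemma cntLe_le_mul (hanti : Antitone lam) (hk : lam 0 ≤ k) (hT : IsSSYT lam T) (v : ℕ) :
    cntLe l lam T v ≤ v * k := by
  have := cntLe_le (k := k) (l := l) hanti hk hT v
  have : (v - 1) * k ≤ v * k := Nat.mul_le_mul_right _ (by omega)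
  have := cntLe_le (k := k) (l := l) hanti hk hT v
  omega

lemma Arow_mono (hanti : Antitone lam) (hk : lam 0 ≤ k) (hT : IsSSYT lam T) :
    Monotone (Arow k l lam T) := by
  apply monotone_nat_of_le_succ
  intro v
  unfold Arow
  have h1 := cntLe_succ (l := l) (lam := lam) (T := T) v
  have h2 := cntEq_le (l := l) hanti hT (v+1)
  have h3 := cntLe_le_mul (k := k) (l := l) hanti hk hT v
  have h4 := cntLe_le_mul (k := k) (l := l) hanti hk hT (v+1)
  have h5 : (v+1) * k = v * k + k := by ring
  omega

lemma Arow_zero : Arow k l lam T 0 = 0 := by simp [Arow]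

lemma cntLe_top (hd : 1 ≤ d) (hbd : ∀ r c, c < lam r → T r c ≤ d - 1) :
    cntLe l lam T d = ∑ i ∈ Finset.range l, lam i := by
  unfold cntLe
  apply Finset.sum_congr rfl
  intro r _
  rw [Finset.filter_true_of_mem, Finset.card_range]
  intro c hc
  simp only [Finset.mem_range] at hc
  have := hbd r c hc
  omega

lemma Arow_top (hd : 1 ≤ d) (hbd : ∀ r c, c < lam r → T r c ≤ d - 1) :
    Arow k l lam T d = k * d - ∑ i ∈ Finset.range l, lam i := by
  unfold Arow
  rw [cntLe_top hd hbd, Nat.mul_comm]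

/-- key inequality: `Arow (T 0 c) > c` for `c < lam 0`. -/
lemma Arow_key (hanti : Antitone lam) (hk : lam 0 ≤ k) (hT : IsSSYT lam T)
    (c : ℕ) (hc : c < lam 0) : c < Arow k l lam T (T 0 c) := by
  have h1 : 1 ≤ T 0 c := hT.1 0 c hc
  obtain ⟨u, hu⟩ : ∃ u, T 0 c = u + 1 := ⟨T 0 c - 1, by omega⟩
  have h2 := cntLe_le (k := k) (l := l) hanti hk hT (u + 1)
  unfold Arow
  rw [hu]
  have h5 : (u+1) * k = u * k + k := by ring
  simp only [Nat.add_sub_cancel] at h2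
  omega

end

def Fmap (lam : ℕ → ℕ) (T : ℕ → ℕ → ℕ) : ℕ → ℕ → ℕ :=
  fun r c => if c < lam r then T (r+1) c - 1 else 0

noncomputable def Gmap (k d l : ℕ) (lam : ℕ → ℕ) (T' : ℕ → ℕ → ℕ) : ℕ → ℕ → ℕ := fun r c =>
  if r = 0 then
    (if c < k * d - ∑ i ∈ Finset.range l, lam i then sInf {v | c < Arow k l lam T' v} else 0)
  else if c < lam (r-1) then T' (r-1) c + 1 else 0

section
variable {k d l : ℕ} {lam : ℕ → ℕ} {T' : ℕ → ℕ → ℕ}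
  (hd : 2 ≤ d) (hanti : Antitone lam) (hk : lam 0 ≤ k)
  (hT' : IsSSYT lam T') (hbd : ∀ r c, c < lam r → T' r c ≤ d - 1)

include hd hanti hk hT' hbd

lemma row0_nonempty {c : ℕ} (hc : c < k * d - ∑ i ∈ Finset.range l, lam i) :
    {v | c < Arow k l lam T' v}.Nonempty := by
  exact ⟨d, by rwa [Set.mem_setOf_eq, Arow_top (by omega) hbd]⟩

lemma row0_le_iff {c : ℕ} (hc : c < k * d - ∑ i ∈ Finset.range l, lam i) (v : ℕ) :
    sInf {v' | c < Arow k l lam T' v'} ≤ v ↔ c < Arow k l lam T' v := by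
  constructor
  · intro h
    have hmem := Nat.sInf_mem (row0_nonempty hd hanti hk hT' hbd hc)
    exact lt_of_lt_of_le hmem (Arow_mono hanti hk hT' h)
  · intro h
    exact Nat.sInf_le h

lemma row0_pos {c : ℕ} (hc : c < k * d - ∑ i ∈ Finset.range l, lam i) :
    1 ≤ sInf {v | c < Arow k l lam T' v} := by
  by_contra h
  have h0 : sInf {v | c < Arow k l lam T' v} ≤ 0 := by omega
  rw [row0_le_iff hd hanti hk hT' hbd hc, Arow_zero] at h0
  omega

lemma row0_count_le {v : ℕ} (hv : v ≤ d) :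
    ((Finset.range (k * d - ∑ i ∈ Finset.range l, lam i)).filter
      fun c => sInf {v' | c < Arow k l lam T' v'} ≤ v).card = Arow k l lam T' v := by
  have hAm : Arow k l lam T' v ≤ k * d - ∑ i ∈ Finset.range l, lam i := by
    rw [← Arow_top (k := k) (by omega : 1 ≤ d) hbd]
    exact Arow_mono hanti hk hT' hv
  have : ((Finset.range (k * d - ∑ i ∈ Finset.range l, lam i)).filter
      fun c => sInf {v' | c < Arow k l lam T' v'} ≤ v) = Finset.range (Arow k l lam T' v) := by
    ext c
    simp only [Finset.mem_filter, Finset.mem_range]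
    constructor
    · rintro ⟨hc, h⟩
      rwa [row0_le_iff hd hanti hk hT' hbd hc] at h
    · intro h
      have hc : c < k * d - ∑ i ∈ Finset.range l, lam i := lt_of_lt_of_le h hAm
      exact ⟨hc, (row0_le_iff hd hanti hk hT' hbd hc v).2 h⟩
  rw [this, Finset.card_range]

lemma row0_count_eq {i : ℕ} (hi1 : 1 ≤ i) (hid : i ≤ d) :
    ((Finset.range (k * d - ∑ i ∈ Finset.range l, lam i)).filter
      fun c => sInf {v' | c < Arow k l lam T' v'} = i).card
      + cntEq l lam T' i = k := by
  classical
  set m := k * d - ∑ i ∈ Finset.range l, lam i with hm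
  have hsplit : ((Finset.range m).filter fun c => sInf {v' | c < Arow k l lam T' v'} ≤ i)
      = ((Finset.range m).filter fun c => sInf {v' | c < Arow k l lam T' v'} ≤ i - 1)
        ∪ ((Finset.range m).filter fun c => sInf {v' | c < Arow k l lam T' v'} = i) := by
    ext c
    simp only [Finset.mem_union, Finset.mem_filter, Finset.mem_range]
    omega
  have hdisj : Disjoint
      ((Finset.range m).filter fun c => sInf {v' | c < Arow k l lam T' v'} ≤ i - 1)
      ((Finset.range m).filter fun c => sInf {v' | c < Arow k l lam T' v'} = i) := by
    rw [Finset.disjoint_left]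
    intro c hc hc'
    simp only [Finset.mem_filter] at hc hc'
    omega
  have hcard := congrArg Finset.card hsplit
  rw [Finset.card_union_of_disjoint hdisj, row0_count_le hd hanti hk hT' hbd hid,
      row0_count_le hd hanti hk hT' hbd (by omega : i - 1 ≤ d)] at hcard
  -- Arow i = Arow (i-1) + (k - cntEq i)
  obtain ⟨u, hu⟩ : ∃ u, i = u + 1 := ⟨i - 1, by omega⟩
  subst hu
  have h1 := cntLe_succ (l := l) (lam := lam) (T := T') u
  have h2 := cntEq_le (l := l) hanti hT' (u+1)
  have h3 := cntLe_le_mul (k := k) (l := l) hanti hk hT' u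
  have h4 := cntLe_le_mul (k := k) (l := l) hanti hk hT' (u+1)
  have h5 : (u+1) * k = u * k + k := by ring
  have e1 : Arow k l lam T' (u+1) = (u+1) * k - cntLe l lam T' (u+1) := rfl
  have e2 : Arow k l lam T' u = u * k - cntLe l lam T' u := rfl
  simp only [Nat.add_sub_cancel] at hcard ⊢
  omega

end

section
variable {k d l : ℕ} {lam : ℕ → ℕ} {T' : ℕ → ℕ → ℕ}

lemma shape_zero : shape k d l lam 0 = k * d - ∑ i ∈ Finset.range l, lam i := by
  simp [shape]

lemma shape_succ (r : ℕ) : shape k d l lam (r+1) = lam r := by simp [shape]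

lemma Gmap_isSSYT (hd : 2 ≤ d) (hanti : Antitone lam) (hk : lam 0 ≤ k)
    (hfirst : lam 0 + ∑ i ∈ Finset.range l, lam i ≤ k * d)
    (hT' : IsSSYT lam T') (hbd : ∀ r c, c < lam r → T' r c ≤ d - 1) :
    IsSSYT (shape k d l lam) (Gmap k d l lam T') := by
  set m := k * d - ∑ i ∈ Finset.range l, lam i with hm
  have hlam0m : lam 0 ≤ m := by omega
  refine ⟨?_, ?_, ?_, ?_⟩
  · -- positivity
    intro r c hc
    match r with
    | 0 =>
      have hcm : c < m := by rwa [shape_zero] at hc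
      simp only [Gmap, ↓reduceIte, ← hm, if_pos hcm]
      exact row0_pos hd hanti hk hT' hbd hcm
    | (n+1) =>
      have hcl : c < lam n := by rwa [shape_succ] at hc
      simp [Gmap, hcl]
  · -- vanishing
    intro r c hc
    match r with
    | 0 =>
      have hcm : ¬ c < m := by rw [shape_zero] at hc; omega
      simp [Gmap, ← hm, hcm]
    | (n+1) =>
      have hcl : ¬ c < lam n := by rw [shape_succ] at hc; omega
      simp [Gmap, hcl]
  · -- rows weakly increasing
    intro r c c' hcc' hc'
    match r with
    | 0 =>
      have hc'm : c' < m := by rwa [shape_zero] at hc'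
      have hcm : c < m := lt_of_le_of_lt hcc' hc'm
      simp only [Gmap, ↓reduceIte, ← hm, if_pos hcm, if_pos hc'm]
      have hmem := Nat.sInf_mem (row0_nonempty hd hanti hk hT' hbd hc'm)
      rw [Set.mem_setOf_eq] at hmem
      exact (row0_le_iff hd hanti hk hT' hbd hcm _).2 (lt_of_le_of_lt hcc' hmem)
    | (n+1) =>
      have hc'l : c' < lam n := by rwa [shape_succ] at hc'
      have hcl : c < lam n := lt_of_le_of_lt hcc' hc'l
      simp only [Gmap, Nat.succ_ne_zero, if_false, Nat.add_sub_cancel, if_pos hcl, if_pos hc'l]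
      have := hT'.2.2.1 n c c' hcc' hc'l
      omega
  · -- columns strictly increasing
    intro r r' c hrr' hc'
    match r' with
    | 0 => omega
    | (n+1) =>
      have hcl : c < lam n := by rwa [shape_succ] at hc'
      match r with
      | 0 =>
        have hcl0 : c < lam 0 := lt_of_lt_of_le hcl (hanti (Nat.zero_le n))
        have hcm : c < m := lt_of_lt_of_le hcl0 hlam0m
        simp only [Gmap, reduceIte, ← hm, if_pos hcm, Nat.succ_ne_zero, if_false,
          Nat.add_sub_cancel, if_pos hcl]
        have h1 : sInf {v | c < Arow k l lam T' v} ≤ T' 0 c :=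
          (row0_le_iff hd hanti hk hT' hbd hcm _).2 (Arow_key hanti hk hT' c hcl0)
        have h2 : T' 0 c ≤ T' n c := by
          match n with
          | 0 => exact le_refl _
          | (j+1) => exact le_of_lt (hT'.2.2.2 0 (j+1) c (Nat.succ_pos j) hcl)
        omega
      | (j+1) =>
        have hjn : j < n := by omega
        have hcjl : c < lam j := lt_of_lt_of_le hcl (hanti (le_of_lt hjn))
        simp only [Gmap, Nat.succ_ne_zero, if_false, Nat.add_sub_cancel,
          if_pos hcl, if_pos hcjl]
        have := hT'.2.2.2 j n c hjn hcl
        omega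

lemma Gmap_content (hd : 2 ≤ d) (hanti : Antitone lam) (hk : lam 0 ≤ k)
    (hfirst : lam 0 + ∑ i ∈ Finset.range l, lam i ≤ k * d)
    (hT' : IsSSYT lam T') (hbd : ∀ r c, c < lam r → T' r c ≤ d - 1) :
    ∀ i, 1 ≤ i → i ≤ d →
      (∑ r ∈ Finset.range (l + 1),
        ((Finset.range (shape k d l lam r)).filter fun c => Gmap k d l lam T' r c = i).card) = k := by
  classical
  intro i hi1 hid
  set m := k * d - ∑ i ∈ Finset.range l, lam i with hm
  rw [Finset.sum_range_succ']
  have h0 : ((Finset.range (shape k d l lam 0)).filter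
      fun c => Gmap k d l lam T' 0 c = i).card
      = ((Finset.range m).filter fun c => sInf {v | c < Arow k l lam T' v} = i).card := by
    rw [shape_zero]
    apply Finset.card_nbij id
    · intro c hc
      simp only [Finset.mem_coe, Finset.mem_filter, Finset.mem_range, Gmap, ↓reduceIte] at hc ⊢
      rcases hc with ⟨hcm, hval⟩
      rw [if_pos hcm] at hval
      exact ⟨hcm, hval⟩
    · intro a ha b hb hab
      exact hab
    · intro c hc
      simp only [Finset.coe_filter, Finset.mem_range, Set.mem_setOf_eq, Set.mem_image,
        Gmap, if_pos rfl] at hc ⊢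
      refine ⟨c, ⟨hc.1, ?_⟩, rfl⟩
      rw [if_pos hc.1]
      exact hc.2
  have hrest : (∑ r ∈ Finset.range l,
      ((Finset.range (shape k d l lam (r+1))).filter
        fun c => Gmap k d l lam T' (r+1) c = i).card) = cntEq l lam T' i := by
    apply Finset.sum_congr rfl
    intro r _
    rw [shape_succ]
    apply congrArg
    apply Finset.filter_congr
    intro c hc
    simp only [Finset.mem_range] at hc
    simp [Gmap, hc]
  rw [h0, hrest]
  have := row0_count_eq (l := l) hd hanti hk hT' hbd hi1 hid
  rw [← hm] at this
  omega

end

section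
variable {k d l : ℕ} {lam : ℕ → ℕ} {T : ℕ → ℕ → ℕ}

/-- A downward-closed subset of `range m` is an initial segment. -/
lemma mem_iff_lt_card {S : Finset ℕ}
    (hdc : ∀ a ∈ S, ∀ b, b ≤ a → b ∈ S) (x : ℕ) : x ∈ S ↔ x < S.card := by
  constructor
  · intro hx
    have hsub : Finset.range (x+1) ⊆ S := by
      intro y hy
      simp only [Finset.mem_range] at hy
      exact hdc x hx y (by omega)
    have := Finset.card_le_card hsub
    rw [Finset.card_range] at this
    omega
  · intro hx
    by_contra hxS
    have hsub : S ⊆ Finset.range x := by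
      intro y hy
      simp only [Finset.mem_range]
      by_contra hyx
      exact hxS (hdc y hy x (by omega))
    have := Finset.card_le_card hsub
    rw [Finset.card_range] at this
    omega

/-- fiberwise counting: summing counts of each value `i ∈ [1, v]` gives the count of
entries `≤ v`, provided all values are `≥ 1`. -/
lemma sum_count_fiber {s : Finset ℕ} {g : ℕ → ℕ} (hg : ∀ x ∈ s, 1 ≤ g x) (v : ℕ) :
    ∑ i ∈ Finset.Icc 1 v, (s.filter fun c => g c = i).card
      = (s.filter fun c => g c ≤ v).card := by
  classical
  rw [Finset.card_eq_sum_card_fiberwise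
    (f := g) (t := Finset.Icc 1 v) (fun x hx => by
      simp only [Finset.mem_coe, Finset.mem_filter] at hx
      simp only [Finset.mem_coe, Finset.mem_Icc]
      exact ⟨hg x hx.1, hx.2⟩)]
  apply Finset.sum_congr rfl
  intro i hi
  simp only [Finset.mem_Icc] at hi
  rw [Finset.filter_filter]
  congr 1
  apply Finset.filter_congr
  intro c hc
  simp only [eq_comm]
  constructor
  · intro h; exact ⟨by omega, h⟩
  · intro h; exact h.2

lemma total_count (hd : 2 ≤ d)
    (hT : IsSSYT (shape k d l lam) T)
    (hcontent : ∀ i, 1 ≤ i → i ≤ d →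
      (∑ r ∈ Finset.range (l + 1),
        ((Finset.range (shape k d l lam r)).filter fun c => T r c = i).card) = k)
    {v : ℕ} (hv : v ≤ d) :
    ∑ r ∈ Finset.range (l + 1),
      ((Finset.range (shape k d l lam r)).filter fun c => T r c ≤ v).card = v * k := by
  classical
  calc ∑ r ∈ Finset.range (l + 1),
        ((Finset.range (shape k d l lam r)).filter fun c => T r c ≤ v).card
      = ∑ r ∈ Finset.range (l + 1), ∑ i ∈ Finset.Icc 1 v,
          ((Finset.range (shape k d l lam r)).filter fun c => T r c = i).card := by
        apply Finset.sum_congr rfl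
        intro r _
        rw [sum_count_fiber (fun c hc => hT.1 r c (Finset.mem_range.1 hc)) v]
    _ = ∑ i ∈ Finset.Icc 1 v, ∑ r ∈ Finset.range (l + 1),
          ((Finset.range (shape k d l lam r)).filter fun c => T r c = i).card :=
        Finset.sum_comm
    _ = ∑ i ∈ Finset.Icc 1 v, k := by
        apply Finset.sum_congr rfl
        intro i hi
        simp only [Finset.mem_Icc] at hi
        exact hcontent i hi.1 (by omega)
    _ = v * k := by
        rw [Finset.sum_const, Nat.card_Icc, smul_eq_mul, Nat.add_sub_cancel]

lemma entries_le (hd : 2 ≤ d)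
    (hzero : ∀ i, l ≤ i → lam i = 0)
    (hfirst : lam 0 + ∑ i ∈ Finset.range l, lam i ≤ k * d)
    (hT : IsSSYT (shape k d l lam) T)
    (hcontent : ∀ i, 1 ≤ i → i ≤ d →
      (∑ r ∈ Finset.range (l + 1),
        ((Finset.range (shape k d l lam r)).filter fun c => T r c = i).card) = k) :
    ∀ r c, c < shape k d l lam r → T r c ≤ d := by
  classical
  have htot := total_count hd hT hcontent (le_refl d)
  have hcells : ∑ r ∈ Finset.range (l + 1), shape k d l lam r = d * k := by
    rw [Finset.sum_range_succ']
    have h1 : ∀ r ∈ Finset.range l, shape k d l lam (r+1) = lam r := fun r _ => shape_succ r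
    rw [Finset.sum_congr rfl h1, shape_zero]
    have hS : ∑ i ∈ Finset.range l, lam i ≤ k * d := le_trans (Nat.le_add_left _ _) hfirst
    rw [Nat.add_sub_cancel' hS, Nat.mul_comm]
  have hle : ∀ r ∈ Finset.range (l + 1),
      ((Finset.range (shape k d l lam r)).filter fun c => T r c ≤ d).card
        ≤ shape k d l lam r := by
    intro r _
    calc ((Finset.range (shape k d l lam r)).filter fun c => T r c ≤ d).card
        ≤ (Finset.range (shape k d l lam r)).card := Finset.card_filter_le _ _
      _ = shape k d l lam r := Finset.card_range _
  have heq : ∀ r ∈ Finset.range (l + 1),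
      ((Finset.range (shape k d l lam r)).filter fun c => T r c ≤ d).card
        = shape k d l lam r := by
    by_contra hcon
    push_neg at hcon
    obtain ⟨r, hr, hne⟩ := hcon
    have hlt : ((Finset.range (shape k d l lam r)).filter fun c => T r c ≤ d).card
        < shape k d l lam r := lt_of_le_of_ne (hle r hr) hne
    have := Finset.sum_lt_sum hle ⟨r, hr, hlt⟩
    omega
  intro r c hc
  have hrl : r < l + 1 := by
    by_contra hr
    have : shape k d l lam r = 0 := by
      have hr1 : r ≠ 0 := by omega
      simp only [shape, if_neg hr1]
      exact hzero (r-1) (by omega)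
    omega
  have hfull : ((Finset.range (shape k d l lam r)).filter fun c => T r c ≤ d)
      = Finset.range (shape k d l lam r) := by
    apply Finset.eq_of_subset_of_card_le (Finset.filter_subset _ _)
    rw [Finset.card_range, heq r (Finset.mem_range.2 hrl)]
  have : c ∈ (Finset.range (shape k d l lam r)).filter fun c => T r c ≤ d := by
    rw [hfull]; exact Finset.mem_range.2 hc
  exact (Finset.mem_filter.1 this).2

end

section
variable {k d l : ℕ} {lam : ℕ → ℕ} {T : ℕ → ℕ → ℕ}

lemma Fmap_cntLe (hT : IsSSYT (shape k d l lam) T) (v : ℕ) :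
    cntLe l lam (Fmap lam T) v
      = ∑ r ∈ Finset.range l, ((Finset.range (lam r)).filter fun c => T (r+1) c ≤ v).card := by
  unfold cntLe
  apply Finset.sum_congr rfl
  intro r _
  congr 1
  apply Finset.filter_congr
  intro c hc
  rw [Finset.mem_range] at hc
  have h1 : 1 ≤ T (r+1) c := hT.1 (r+1) c (by rwa [shape_succ])
  simp only [Fmap, if_pos hc]
  constructor
  · intro h; omega
  · intro h; omega

lemma count_split (hd : 2 ≤ d)
    (hT : IsSSYT (shape k d l lam) T)
    (hcontent : ∀ i, 1 ≤ i → i ≤ d →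
      (∑ r ∈ Finset.range (l + 1),
        ((Finset.range (shape k d l lam r)).filter fun c => T r c = i).card) = k)
    {v : ℕ} (hv : v ≤ d) :
    ((Finset.range (k * d - ∑ i ∈ Finset.range l, lam i)).filter fun c => T 0 c ≤ v).card
      + cntLe l lam (Fmap lam T) v = v * k := by
  have htot := total_count hd hT hcontent hv
  rw [Finset.sum_range_succ'] at htot
  rw [Fmap_cntLe hT v]
  have h1 : ∀ r ∈ Finset.range l,
      ((Finset.range (shape k d l lam (r+1))).filter fun c => T (r+1) c ≤ v).card
        = ((Finset.range (lam r)).filter fun c => T (r+1) c ≤ v).card := by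
    intro r _
    rw [shape_succ]
  rw [Finset.sum_congr rfl h1, shape_zero] at htot
  omega

lemma Arow_Fmap (hd : 2 ≤ d)
    (hT : IsSSYT (shape k d l lam) T)
    (hcontent : ∀ i, 1 ≤ i → i ≤ d →
      (∑ r ∈ Finset.range (l + 1),
        ((Finset.range (shape k d l lam r)).filter fun c => T r c = i).card) = k)
    {v : ℕ} (hv : v ≤ d) :
    Arow k l lam (Fmap lam T) v
      = ((Finset.range (k * d - ∑ i ∈ Finset.range l, lam i)).filter
          fun c => T 0 c ≤ v).card := by
  have := count_split hd hT hcontent hv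
  unfold Arow
  omega

lemma prefix_iff (hT : IsSSYT (shape k d l lam) T)
    {x : ℕ} (hx : x < k * d - ∑ i ∈ Finset.range l, lam i) (v : ℕ) :
    T 0 x ≤ v ↔ x < ((Finset.range (k * d - ∑ i ∈ Finset.range l, lam i)).filter
      fun c => T 0 c ≤ v).card := by
  set m := k * d - ∑ i ∈ Finset.range l, lam i with hm
  have hdc : ∀ a ∈ (Finset.range m).filter fun c => T 0 c ≤ v,
      ∀ b, b ≤ a → b ∈ (Finset.range m).filter fun c => T 0 c ≤ v := by
    intro a ha b hba
    simp only [Finset.mem_filter, Finset.mem_range] at ha ⊢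
    refine ⟨by omega, ?_⟩
    have := hT.2.2.1 0 b a hba (by rw [shape_zero, ← hm]; exact ha.1)
    omega
  rw [← mem_iff_lt_card hdc x]
  simp only [Finset.mem_filter, Finset.mem_range]
  constructor
  · exact fun h => ⟨hx, h⟩
  · exact fun h => h.2

lemma left_row0 (hd : 2 ≤ d)
    (hzero : ∀ i, l ≤ i → lam i = 0)
    (hfirst : lam 0 + ∑ i ∈ Finset.range l, lam i ≤ k * d)
    (hT : IsSSYT (shape k d l lam) T)
    (hcontent : ∀ i, 1 ≤ i → i ≤ d →
      (∑ r ∈ Finset.range (l + 1),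
        ((Finset.range (shape k d l lam r)).filter fun c => T r c = i).card) = k)
    {c : ℕ} (hc : c < k * d - ∑ i ∈ Finset.range l, lam i) :
    sInf {v | c < Arow k l lam (Fmap lam T) v} = T 0 c := by
  have hTd : T 0 c ≤ d :=
    entries_le hd hzero hfirst hT hcontent 0 c (by rwa [shape_zero])
  have hmem : c < Arow k l lam (Fmap lam T) (T 0 c) := by
    rw [Arow_Fmap hd hT hcontent hTd]
    exact (prefix_iff hT hc (T 0 c)).1 (le_refl _)
  apply le_antisymm
  · exact Nat.sInf_le hmem
  · have hsmem := Nat.sInf_mem (⟨T 0 c, hmem⟩ :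
      Set.Nonempty {v | c < Arow k l lam (Fmap lam T) v})
    rw [Set.mem_setOf_eq] at hsmem
    by_contra h
    push_neg at h
    have hvd : sInf {v | c < Arow k l lam (Fmap lam T) v} ≤ d := by omega
    rw [Arow_Fmap hd hT hcontent hvd] at hsmem
    have := (prefix_iff hT hc _).2 hsmem
    omega

lemma Fmap_mem (hd : 2 ≤ d) (hanti : Antitone lam) (hk : lam 0 ≤ k)
    (hzero : ∀ i, l ≤ i → lam i = 0)
    (hfirst : lam 0 + ∑ i ∈ Finset.range l, lam i ≤ k * d)
    (hT : IsSSYT (shape k d l lam) T)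
    (hcontent : ∀ i, 1 ≤ i → i ≤ d →
      (∑ r ∈ Finset.range (l + 1),
        ((Finset.range (shape k d l lam r)).filter fun c => T r c = i).card) = k) :
    IsSSYT lam (Fmap lam T) ∧ ∀ r c, c < lam r → Fmap lam T r c ≤ d - 1 := by
  have hlam0m : lam 0 ≤ k * d - ∑ i ∈ Finset.range l, lam i := by omega
  have hge2 : ∀ r c, c < lam r → 2 ≤ T (r+1) c := by
    intro r c hc
    have hc0 : c < lam 0 := lt_of_lt_of_le hc (hanti (Nat.zero_le r))
    have h1 : 1 ≤ T 0 c := hT.1 0 c (by rw [shape_zero]; omega)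
    have h2 := hT.2.2.2 0 (r+1) c (Nat.succ_pos r) (by rwa [shape_succ])
    omega
  refine ⟨⟨?_, ?_, ?_, ?_⟩, ?_⟩
  · intro r c hc
    have := hge2 r c hc
    simp only [Fmap, if_pos hc]
    omega
  · intro r c hc
    simp only [Fmap, if_neg (by omega : ¬ c < lam r)]
  · intro r c c' hcc' hc'
    have hc : c < lam r := lt_of_le_of_lt hcc' hc'
    simp only [Fmap, if_pos hc, if_pos hc']
    have := hT.2.2.1 (r+1) c c' hcc' (by rwa [shape_succ])
    omega
  · intro r r' c hrr' hc'
    have hc : c < lam r := lt_of_lt_of_le hc' (hanti (le_of_lt hrr'))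
    simp only [Fmap, if_pos hc, if_pos hc']
    have h1 := hge2 r c hc
    have h2 := hT.2.2.2 (r+1) (r'+1) c (by omega) (by rwa [shape_succ])
    omega
  · intro r c hc
    simp only [Fmap, if_pos hc]
    have := entries_le hd hzero hfirst hT hcontent (r+1) c (by rwa [shape_succ])
    omega

lemma GF_eq (hd : 2 ≤ d)
    (hzero : ∀ i, l ≤ i → lam i = 0)
    (hfirst : lam 0 + ∑ i ∈ Finset.range l, lam i ≤ k * d)
    (hT : IsSSYT (shape k d l lam) T)
    (hcontent : ∀ i, 1 ≤ i → i ≤ d →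
      (∑ r ∈ Finset.range (l + 1),
        ((Finset.range (shape k d l lam r)).filter fun c => T r c = i).card) = k) :
    Gmap k d l lam (Fmap lam T) = T := by
  funext r c
  match r with
  | 0 =>
    by_cases hc : c < k * d - ∑ i ∈ Finset.range l, lam i
    · simp only [Gmap, reduceIte, if_pos hc]
      exact left_row0 hd hzero hfirst hT hcontent hc
    · simp only [Gmap, reduceIte, if_neg hc]
      exact (hT.2.1 0 c (by rw [shape_zero]; omega)).symm
  | (n+1) =>
    by_cases hc : c < lam n
    · have h1 : 1 ≤ T (n+1) c := hT.1 (n+1) c (by rwa [shape_succ])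
      simp only [Gmap, Nat.succ_ne_zero, if_false, Nat.add_sub_cancel, if_pos hc,
        Fmap, if_pos hc]
      omega
    · simp only [Gmap, Nat.succ_ne_zero, if_false, Nat.add_sub_cancel, if_neg hc]
      exact (hT.2.1 (n+1) c (by rw [shape_succ]; omega)).symm

lemma FG_eq {T' : ℕ → ℕ → ℕ} (hT' : IsSSYT lam T') :
    Fmap lam (Gmap k d l lam T') = T' := by
  funext r c
  by_cases hc : c < lam r
  · simp only [Fmap, if_pos hc, Gmap, Nat.succ_ne_zero, if_false, Nat.add_sub_cancel,
      if_pos hc]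
  · simp only [Fmap, if_neg hc]
    exact (hT'.2.1 r c (by omega)).symm

end

end Stmt7


/-- Section 2.2: for `d ≥ 2`, `k ≥ λ_1` and `kd − |λ| ≥ λ_1`, the number of semistandard
Young tableaux of shape `(kd − |λ|, λ_1, …, λ_l)` in which each value `i ∈ {1,…,d}` occurs
exactly `k` times equals the number of semistandard Young tableaux of shape `λ` with entries
in `{1,…,d−1}` (the bijection removes the first row and subtracts `1` from every remaining
entry); here `λ` is the partition encoded by the antitone function `lam`, with exactly `l`
nonzero parts.  The first count is the multiplicity `s_{k,d}(λ)` of `S_{(kd−|λ|,λ)}V` inside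
`(S^k V)^{⊗d}`, the second one is `dim S_λ ℂ^{d−1}`. -/
theorem stmt_7 (k d l : ℕ) (hd : 2 ≤ d)
    (lam : ℕ → ℕ) (hanti : Antitone lam)
    (hzero : ∀ i, l ≤ i → lam i = 0) (hpos : ∀ i, i < l → 0 < lam i)
    (hk : lam 0 ≤ k)
    (hfirst : lam 0 + ∑ i ∈ Finset.range l, lam i ≤ k * d) :
    Nat.card {T : ℕ → ℕ → ℕ // IsSSYT (shape k d l lam) T ∧
      ∀ i, 1 ≤ i → i ≤ d →
        (∑ r ∈ Finset.range (l + 1),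
          ((Finset.range (shape k d l lam r)).filter fun c => T r c = i).card) = k} =
    Nat.card {T : ℕ → ℕ → ℕ // IsSSYT lam T ∧
      ∀ r c, c < lam r → T r c ≤ d - 1} := by
  apply Nat.card_congr
  exact {
    toFun := fun T => ⟨Stmt7.Fmap lam T.1,
      (Stmt7.Fmap_mem hd hanti hk hzero hfirst T.2.1 T.2.2).1,
      (Stmt7.Fmap_mem hd hanti hk hzero hfirst T.2.1 T.2.2).2⟩
    invFun := fun T' => ⟨Stmt7.Gmap k d l lam T'.1,
      Stmt7.Gmap_isSSYT hd hanti hk hfirst T'.2.1 T'.2.2,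
      Stmt7.Gmap_content hd hanti hk hfirst T'.2.1 T'.2.2⟩
    left_inv := fun T => Subtype.ext (Stmt7.GF_eq hd hzero hfirst T.2.1 T.2.2)
    right_inv := fun T' => Subtype.ext (Stmt7.FG_eq (k := k) (d := d) (l := l) T'.2.1) }
end

section
/- Let λ = (λ_1 ≥ … ≥ λ_l > 0) be a partition and d ≥ 2 an integer. For any two integers k, k' with k ≥ λ_1, k' ≥ λ_1, kd − |λ| ≥ λ_1 and k'd − |λ| ≥ λ_1, the number of semistandard Young tableaux of shape (kd − |λ|, λ_1, …, λ_l) in which each value i ∈ {1,…,d} occurs exactly k times equals the number of semistandard Young tableaux of shape (k'd − |λ|, λ_1, …, λ_l) in which each value i ∈ {1,…,d} occurs exactly k' times. (The multiplicity s_{k,d}(λ) is constant for k ≥ λ_1.) -/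
namespace Stmt8

open Finset

def lshape (l : ℕ) (lam : ℕ → ℕ) : ℕ → ℕ := fun r => if r = 0 then 0 else lam (r - 1)

def Lower (d l : ℕ) (lam : ℕ → ℕ) (L : ℕ → ℕ → ℕ) : Prop :=
  IsSSYT (lshape l lam) L ∧ ∀ r c, c < lshape l lam r → r + 1 ≤ L r c ∧ L r c ≤ d

def mm (l : ℕ) (lam : ℕ → ℕ) (L : ℕ → ℕ → ℕ) (i : ℕ) : ℕ :=
  ∑ r ∈ range l, ((range (lam r)).filter fun c => L (r + 1) c = i).card

def NN (k l : ℕ) (lam : ℕ → ℕ) (L : ℕ → ℕ → ℕ) (v : ℕ) : ℕ :=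
  ∑ i ∈ Icc 1 v, (k - mm l lam L i)

noncomputable def row0 (k l : ℕ) (lam : ℕ → ℕ) (L : ℕ → ℕ → ℕ) (c : ℕ) : ℕ :=
  sInf {v | 1 ≤ v ∧ c < NN k l lam L v}

lemma card_filter_mem (g : ℕ → ℕ) (n : ℕ) (t : Finset ℕ) :
    ((Finset.range n).filter fun c => g c ∈ t).card
      = ∑ i ∈ t, ((Finset.range n).filter fun c => g c = i).card := by
  rw [Finset.card_eq_sum_card_fiberwise (f := g) (s := (Finset.range n).filter fun c => g c ∈ t) (t := t)
      (fun c hc => (Finset.mem_filter.mp hc).2)]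
  refine Finset.sum_congr rfl fun i hi => ?_
  congr 1
  ext c
  simp only [Finset.mem_filter, Finset.mem_range]
  constructor
  · rintro ⟨⟨hc, _⟩, he⟩; exact ⟨hc, he⟩
  · rintro ⟨hc, he⟩; exact ⟨⟨hc, he ▸ hi⟩, he⟩

section

variable {d l k : ℕ} {lam : ℕ → ℕ} {L : ℕ → ℕ → ℕ}

lemma lshape_succ (r : ℕ) : lshape l lam (r + 1) = lam r := by
  simp [lshape]

/-- each value appears at most once per column, so `mm i ≤ lam 0`. -/
lemma mm_le_lam0 (hanti : Antitone lam) (hL : Lower d l lam L) (i : ℕ) :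
    mm l lam L i ≤ lam 0 := by
  classical
  have h : mm l lam L i
      = ((range l).sigma fun r => (range (lam r)).filter fun c => L (r + 1) c = i).card := by
    unfold mm; rw [Finset.card_sigma]
  rw [h, ← Finset.card_range (lam 0)]
  apply Finset.card_le_card_of_injOn (fun p => p.2)
  · rintro ⟨r, c⟩ (hp : (⟨r, c⟩ : (_ : ℕ) × ℕ) ∈ (range l).sigma fun r => (range (lam r)).filter fun c => L (r + 1) c = i)
    simp only [Finset.mem_coe, Finset.mem_sigma, Finset.mem_filter, Finset.mem_range] at hp ⊢
    exact lt_of_lt_of_le hp.2.1 (hanti (Nat.zero_le r))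
  · rintro ⟨r, c⟩ hp ⟨r', c'⟩ hp' (he : c = c')
    subst he
    simp only [Finset.coe_sigma, Set.mem_sigma_iff, Finset.mem_coe, Finset.mem_filter,
      Finset.mem_range] at hp hp'
    rcases hp with ⟨hr, hc, hv⟩
    rcases hp' with ⟨hr', hc', hv'⟩
    rcases lt_trichotomy r r' with h | h | h
    · exfalso
      have := hL.1.2.2.2 (r + 1) (r' + 1) c (by omega)
        (by rw [lshape_succ]; exact hc')
      omega
    · subst h; rfl
    · exfalso
      have := hL.1.2.2.2 (r' + 1) (r + 1) c (by omega)
        (by rw [lshape_succ]; exact hc)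
      omega

lemma sum_mm_Icc (v : ℕ) :
    ∑ i ∈ Icc 1 v, mm l lam L i
      = ∑ r ∈ range l, ((range (lam r)).filter fun c => L (r + 1) c ∈ Icc 1 v).card := by
  unfold mm
  rw [Finset.sum_comm]
  exact Finset.sum_congr rfl fun r _ => (card_filter_mem _ _ _).symm

lemma M_le (hanti : Antitone lam) (hL : Lower d l lam L) (v : ℕ) :
    ∑ i ∈ Icc 1 v, mm l lam L i ≤ (v - 1) * lam 0 := by
  classical
  rw [sum_mm_Icc]
  calc ∑ r ∈ range l, ((range (lam r)).filter fun c => L (r + 1) c ∈ Icc 1 v).card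
      ≤ ∑ r ∈ range l, (if r < v - 1 then lam 0 else 0) := by
        apply Finset.sum_le_sum
        intro r _
        by_cases hr : r < v - 1
        · rw [if_pos hr]
          calc ((range (lam r)).filter fun c => L (r + 1) c ∈ Icc 1 v).card
              ≤ (range (lam r)).card := Finset.card_filter_le _ _
            _ = lam r := Finset.card_range _
            _ ≤ lam 0 := hanti (Nat.zero_le r)
        · rw [if_neg hr]
          have : ((range (lam r)).filter fun c => L (r + 1) c ∈ Icc 1 v) = ∅ := by
            apply Finset.filter_eq_empty_iff.mpr
            intro c hc
            rw [Finset.mem_range] at hc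
            have h1 := (hL.2 (r + 1) c (by rw [lshape_succ]; exact hc)).1
            rw [Finset.mem_Icc]
            omega
          rw [this]; simp
    _ = ((range l).filter fun r => r < v - 1).card * lam 0 := by
        rw [← Finset.sum_filter, Finset.sum_const, smul_eq_mul]
    _ ≤ (v - 1) * lam 0 := by
        apply Nat.mul_le_mul_right
        calc ((range l).filter fun r => r < v - 1).card
            ≤ (range (v - 1)).card := by
              apply Finset.card_le_card
              intro x hx
              simp only [Finset.mem_filter, Finset.mem_range] at hx ⊢
              exact hx.2
          _ = v - 1 := Finset.card_range _

lemma M_d (hL : Lower d l lam L) :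
    ∑ i ∈ Icc 1 d, mm l lam L i = ∑ r ∈ range l, lam r := by
  rw [sum_mm_Icc]
  refine Finset.sum_congr rfl fun r _ => ?_
  have : ((range (lam r)).filter fun c => L (r + 1) c ∈ Icc 1 d) = range (lam r) := by
    apply Finset.filter_true_of_mem
    intro c hc
    rw [Finset.mem_range] at hc
    have h := hL.2 (r + 1) c (by rw [lshape_succ]; exact hc)
    rw [Finset.mem_Icc]
    omega
  rw [this, Finset.card_range]

lemma NN_add_M (hm : ∀ i, mm l lam L i ≤ k) (v : ℕ) :
    NN k l lam L v + ∑ i ∈ Icc 1 v, mm l lam L i = v * k := by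
  unfold NN
  rw [← Finset.sum_add_distrib]
  rw [Finset.sum_congr rfl fun i _ => Nat.sub_add_cancel (hm i)]
  rw [Finset.sum_const, Nat.card_Icc]
  simp [Nat.mul_comm]

lemma NN_mono {v v' : ℕ} (h : v ≤ v') : NN k l lam L v ≤ NN k l lam L v' :=
  Finset.sum_le_sum_of_subset (Finset.Icc_subset_Icc_right h)

lemma NN_ge_k (hanti : Antitone lam) (hL : Lower d l lam L) (hk : lam 0 ≤ k)
    {v : ℕ} (hv : 1 ≤ v) : k ≤ NN k l lam L v := by
  have hm : ∀ i, mm l lam L i ≤ k := fun i => le_trans (mm_le_lam0 hanti hL i) hk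
  have h1 := NN_add_M (k := k) hm v
  have h2 := M_le hanti hL v
  have h3 : (v - 1) * lam 0 ≤ (v - 1) * k := Nat.mul_le_mul_left _ hk
  have h4 : v * k = (v - 1) * k + k := by
    cases v with
    | zero => exact absurd hv (by omega)
    | succ w => simp [Nat.succ_mul]
  linarith

lemma NN_d (hanti : Antitone lam) (hL : Lower d l lam L) (hk : lam 0 ≤ k) :
    NN k l lam L d = k * d - ∑ r ∈ range l, lam r := by
  have hm : ∀ i, mm l lam L i ≤ k := fun i => le_trans (mm_le_lam0 hanti hL i) hk
  have h1 := NN_add_M (k := k) hm d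
  rw [M_d hL] at h1
  rw [Nat.mul_comm k d]
  exact Nat.eq_sub_of_add_eq h1


end

section row0lem

variable {d l k : ℕ} {lam : ℕ → ℕ} {L : ℕ → ℕ → ℕ}

lemma row0_le {c v : ℕ} (hv : 1 ≤ v) (h : c < NN k l lam L v) : row0 k l lam L c ≤ v :=
  Nat.sInf_le ⟨hv, h⟩

lemma row0_mem (hd : 1 ≤ d) (hNd : c < NN k l lam L d) :
    1 ≤ row0 k l lam L c ∧ c < NN k l lam L (row0 k l lam L c) :=
  Nat.sInf_mem (⟨d, hd, hNd⟩ : Set.Nonempty {v | 1 ≤ v ∧ c < NN k l lam L v})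

lemma row0_le_iff (hd : 1 ≤ d) (hNd : c < NN k l lam L d) {v : ℕ} (hv : 1 ≤ v) :
    row0 k l lam L c ≤ v ↔ c < NN k l lam L v := by
  constructor
  · intro h
    exact lt_of_lt_of_le (row0_mem hd hNd).2 (NN_mono h)
  · exact row0_le hv

lemma row0_mono (hd : 1 ≤ d) {c c' : ℕ} (hcc : c ≤ c') (hNd : c' < NN k l lam L d) :
    row0 k l lam L c ≤ row0 k l lam L c' := by
  have h := row0_mem hd hNd
  exact row0_le h.1 (lt_of_le_of_lt hcc h.2)

end row0lem

/-- reconstructed full tableau -/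
noncomputable def recT (k d l : ℕ) (lam : ℕ → ℕ) (L : ℕ → ℕ → ℕ) : ℕ → ℕ → ℕ :=
  fun r c => if r = 0 then
    (if c < k * d - ∑ i ∈ Finset.range l, lam i then row0 k l lam L c else 0)
  else L r c

section recTlem

variable {d l k : ℕ} {lam : ℕ → ℕ} {L : ℕ → ℕ → ℕ}

lemma shape_succ (r : ℕ) : shape k d l lam (r + 1) = lam r := by simp [shape]

lemma shape_zero : shape k d l lam 0 = k * d - ∑ i ∈ Finset.range l, lam i := rfl

lemma recT_succ (r c : ℕ) : recT k d l lam L (r + 1) c = L (r + 1) c := by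
  simp [recT]

lemma recT_zero_lt {c : ℕ} (hc : c < k * d - ∑ i ∈ Finset.range l, lam i) :
    recT k d l lam L 0 c = row0 k l lam L c := by
  simp [recT, hc]

lemma recT_zero_ge {c : ℕ} (hc : ¬ c < k * d - ∑ i ∈ Finset.range l, lam i) :
    recT k d l lam L 0 c = 0 := by
  simp [recT, hc]

lemma recT_isSSYT (hd : 2 ≤ d) (hanti : Antitone lam)
    (hk : lam 0 ≤ k)
    (hfirst : lam 0 + ∑ i ∈ Finset.range l, lam i ≤ k * d)
    (hL : Lower d l lam L) :
    IsSSYT (shape k d l lam) (recT k d l lam L) := by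
  have hd1 : 1 ≤ d := by omega
  have hlam0 : lam 0 ≤ k * d - ∑ i ∈ Finset.range l, lam i := by omega
  have hNd : ∀ c : ℕ, c < k * d - ∑ i ∈ Finset.range l, lam i → c < NN k l lam L d := by
    intro c hc
    rwa [NN_d hanti hL hk]
  refine ⟨?_, ?_, ?_, ?_⟩
  · -- positivity
    intro r c hc
    cases r with
    | zero =>
      rw [shape_zero] at hc
      rw [recT_zero_lt hc]
      exact (row0_mem hd1 (hNd c hc)).1
    | succ s =>
      rw [shape_succ] at hc
      have := (hL.2 (s + 1) c (by rw [lshape_succ]; exact hc)).1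
      rw [recT_succ]
      omega
  · -- zero outside
    intro r c hc
    cases r with
    | zero =>
      rw [shape_zero] at hc
      exact recT_zero_ge (by omega)
    | succ s =>
      rw [shape_succ] at hc
      rw [recT_succ]
      exact hL.1.2.1 (s + 1) c (by rw [lshape_succ]; exact hc)
  · -- rows weakly increasing
    intro r c c' hcc hc'
    cases r with
    | zero =>
      rw [shape_zero] at hc'
      have hc : c < k * d - ∑ i ∈ Finset.range l, lam i := lt_of_le_of_lt hcc hc'
      rw [recT_zero_lt hc, recT_zero_lt hc']
      exact row0_mono hd1 hcc (hNd c' hc')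
    | succ s =>
      rw [shape_succ] at hc'
      rw [recT_succ, recT_succ]
      exact hL.1.2.2.1 (s + 1) c c' hcc (by rw [lshape_succ]; exact hc')
  · -- columns strictly increasing
    intro r r' c hrr hc
    cases r' with
    | zero => omega
    | succ s' =>
      rw [shape_succ] at hc
      have hcl0 : c < lam 0 := lt_of_lt_of_le hc (hanti (Nat.zero_le s'))
      have hLge : s' + 2 ≤ L (s' + 1) c ∧ L (s' + 1) c ≤ d :=
        (hL.2 (s' + 1) c (by rw [lshape_succ]; exact hc))
      cases r with
      | zero =>
        have hc0 : c < k * d - ∑ i ∈ Finset.range l, lam i := lt_of_lt_of_le hcl0 hlam0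
        rw [recT_zero_lt hc0, recT_succ]
        have hv1 : 1 ≤ L (s' + 1) c - 1 := by omega
        have hcN : c < NN k l lam L (L (s' + 1) c - 1) := by
          have := NN_ge_k hanti hL hk hv1
          omega
        have := row0_le (L := L) hv1 hcN
        omega
      | succ s =>
        rw [recT_succ, recT_succ]
        exact hL.1.2.2.2 (s + 1) (s' + 1) c hrr (by rw [lshape_succ]; exact hc)

lemma recT_content (hd : 2 ≤ d) (hanti : Antitone lam)
    (hk : lam 0 ≤ k)
    (hfirst : lam 0 + ∑ i ∈ Finset.range l, lam i ≤ k * d)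
    (hL : Lower d l lam L) :
    ∀ i, 1 ≤ i → i ≤ d →
      (∑ r ∈ Finset.range (l + 1),
        ((Finset.range (shape k d l lam r)).filter fun c => recT k d l lam L r c = i).card) = k := by
  intro i hi1 hid
  have hd1 : 1 ≤ d := by omega
  have hmi : mm l lam L i ≤ k := le_trans (mm_le_lam0 hanti hL i) hk
  have hNd : NN k l lam L d = k * d - ∑ i ∈ Finset.range l, lam i := NN_d hanti hL hk
  rw [Finset.sum_range_succ']
  have htail : ∀ r ∈ Finset.range l,
      ((Finset.range (shape k d l lam (r + 1))).filter
        fun c => recT k d l lam L (r + 1) c = i).card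
        = ((Finset.range (lam r)).filter fun c => L (r + 1) c = i).card := by
    intro r _
    rw [shape_succ]
    simp only [recT_succ]
  rw [Finset.sum_congr rfl htail]
  have hNi : NN k l lam L i = NN k l lam L (i - 1) + (k - mm l lam L i) := by
    have hieq : i = (i - 1) + 1 := by omega
    conv_lhs => rw [hieq]
    rw [NN, Finset.sum_Icc_succ_top (by omega), ← NN, ← hieq]
  have hhead : ((Finset.range (shape k d l lam 0)).filter fun c => recT k d l lam L 0 c = i)
      = Finset.Ico (NN k l lam L (i - 1)) (NN k l lam L i) := by
    ext c
    rw [shape_zero, Finset.mem_filter, Finset.mem_range, Finset.mem_Ico]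
    constructor
    · rintro ⟨hc, he⟩
      rw [recT_zero_lt hc] at he
      have hmem := row0_mem hd1 (c := c) (by rw [hNd]; exact hc)
      constructor
      · by_contra hcon
        push_neg at hcon
        rcases Nat.eq_zero_or_pos (i - 1) with h0 | h0
        · have : NN k l lam L (i-1) = 0 := by rw [h0]; simp [NN]
          omega
        · have := row0_le (L := L) h0 (by omega : c < NN k l lam L (i - 1))
          omega
      · rw [← he]; exact hmem.2
    · rintro ⟨h1, h2⟩
      have hc : c < k * d - ∑ i ∈ Finset.range l, lam i :=
        lt_of_lt_of_le h2 (by rw [← hNd]; exact NN_mono hid)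
      refine ⟨hc, ?_⟩
      rw [recT_zero_lt hc]
      have hle : row0 k l lam L c ≤ i := row0_le hi1 h2
      have hge : i ≤ row0 k l lam L c := by
        by_contra hcon
        push_neg at hcon
        have hmem := row0_mem hd1 (c := c) (by rw [hNd]; exact hc)
        have : NN k l lam L (row0 k l lam L c) ≤ NN k l lam L (i - 1) :=
          NN_mono (by omega)
        omega
      omega
  rw [hhead, Nat.card_Ico]
  have htl : ∑ r ∈ Finset.range l,
      ((Finset.range (lam r)).filter fun c => L (r + 1) c = i).card = mm l lam L i := rfl
  rw [htl]
  omega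

end recTlem

/-- restriction of a full tableau to its lower rows -/
def resL (T : ℕ → ℕ → ℕ) : ℕ → ℕ → ℕ := fun r c => if r = 0 then 0 else T r c

lemma resL_succ (T : ℕ → ℕ → ℕ) (r c : ℕ) : resL T (r + 1) c = T (r + 1) c := by
  simp [resL]

lemma resL_zero (T : ℕ → ℕ → ℕ) (c : ℕ) : resL T 0 c = 0 := rfl

section fwd

variable {d l k : ℕ} {lam : ℕ → ℕ} {T : ℕ → ℕ → ℕ}

lemma entry_ge (hanti : Antitone lam)
    (hfirst : lam 0 + ∑ i ∈ Finset.range l, lam i ≤ k * d)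
    (hT : IsSSYT (shape k d l lam) T) :
    ∀ r c, c < lam r → r + 2 ≤ T (r + 1) c := by
  intro r
  induction r with
  | zero =>
    intro c hc
    have hc0 : c < lam 0 := hc
    have h0 : 1 ≤ T 0 c := hT.1 0 c (by rw [shape_zero]; omega)
    have := hT.2.2.2 0 1 c (by omega) (by rw [shape_succ]; exact hc)
    show 2 ≤ T 1 c
    omega
  | succ s ih =>
    intro c hc
    have hc' : c < lam s := lt_of_lt_of_le hc (hanti (by omega))
    have h1 := ih c hc'
    have := hT.2.2.2 (s + 1) (s + 2) c (by omega) (by rw [shape_succ]; exact hc)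
    show s + 3 ≤ T (s + 2) c
    omega

lemma entries_le (hd : 2 ≤ d)
    (hfirst : lam 0 + ∑ i ∈ Finset.range l, lam i ≤ k * d)
    (hT : IsSSYT (shape k d l lam) T)
    (hcnt : ∀ i, 1 ≤ i → i ≤ d →
      (∑ r ∈ Finset.range (l + 1),
        ((Finset.range (shape k d l lam r)).filter fun c => T r c = i).card) = k) :
    ∀ r, r < l + 1 → ∀ c, c < shape k d l lam r → T r c ∈ Finset.Icc 1 d := by
  classical
  have hsum1 : ∀ r, ((range (shape k d l lam r)).filter fun c => T r c ∈ Icc 1 d).card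
      = ∑ i ∈ Icc 1 d, ((range (shape k d l lam r)).filter fun c => T r c = i).card :=
    fun r => card_filter_mem _ _ _
  have hswap : ∑ r ∈ range (l + 1),
      ((range (shape k d l lam r)).filter fun c => T r c ∈ Icc 1 d).card = d * k := by
    rw [Finset.sum_congr rfl (fun r _ => hsum1 r), Finset.sum_comm]
    rw [Finset.sum_congr rfl
      (fun i hi => hcnt i (Finset.mem_Icc.mp hi).1 (Finset.mem_Icc.mp hi).2)]
    rw [Finset.sum_const, Nat.card_Icc]
    simp [Nat.mul_comm]
  have hcomm : k * d = d * k := Nat.mul_comm k d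
  have hshapes : ∑ r ∈ range (l + 1), shape k d l lam r = d * k := by
    rw [Finset.sum_range_succ']
    rw [Finset.sum_congr rfl (fun r (_ : r ∈ range l) => shape_succ (k := k) (d := d) r),
      shape_zero]
    omega
  have hle : ∀ r ∈ range (l + 1),
      ((range (shape k d l lam r)).filter fun c => T r c ∈ Icc 1 d).card
        ≤ shape k d l lam r := by
    intro r _
    calc ((range (shape k d l lam r)).filter fun c => T r c ∈ Icc 1 d).card
        ≤ (range (shape k d l lam r)).card := Finset.card_filter_le _ _
      _ = shape k d l lam r := Finset.card_range _
  have heq := (Finset.sum_eq_sum_iff_of_le hle).mp (hswap.trans hshapes.symm)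
  intro r hr c hc
  have h2 : ((range (shape k d l lam r)).filter fun c => T r c ∈ Icc 1 d)
      = range (shape k d l lam r) :=
    Finset.eq_of_subset_of_card_le (Finset.filter_subset _ _)
      (by rw [heq r (Finset.mem_range.mpr hr), Finset.card_range])
  have hmem : c ∈ (range (shape k d l lam r)).filter fun c => T r c ∈ Icc 1 d := by
    rw [h2]; exact Finset.mem_range.mpr hc
  exact (Finset.mem_filter.mp hmem).2

lemma resL_lower (hd : 2 ≤ d) (hanti : Antitone lam)
    (hzero : ∀ i, l ≤ i → lam i = 0)
    (hfirst : lam 0 + ∑ i ∈ Finset.range l, lam i ≤ k * d)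
    (hT : IsSSYT (shape k d l lam) T)
    (hcnt : ∀ i, 1 ≤ i → i ≤ d →
      (∑ r ∈ Finset.range (l + 1),
        ((Finset.range (shape k d l lam r)).filter fun c => T r c = i).card) = k) :
    Lower d l lam (resL T) := by
  have hge := entry_ge hanti hfirst hT
  have hle := entries_le hd hfirst hT hcnt
  constructor
  · refine ⟨?_, ?_, ?_, ?_⟩
    · intro r c hc
      cases r with
      | zero => simp [lshape] at hc
      | succ s =>
        rw [lshape_succ] at hc
        rw [resL_succ]
        have := hge s c hc
        omega
    · intro r c hc
      cases r with
      | zero => rfl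
      | succ s =>
        rw [lshape_succ] at hc
        rw [resL_succ]
        exact hT.2.1 (s + 1) c (by rw [shape_succ]; exact hc)
    · intro r c c' hcc hc'
      cases r with
      | zero => simp [lshape] at hc'
      | succ s =>
        rw [lshape_succ] at hc'
        rw [resL_succ, resL_succ]
        exact hT.2.2.1 (s + 1) c c' hcc (by rw [shape_succ]; exact hc')
    · intro r r' c hrr hc
      cases r' with
      | zero => simp [lshape] at hc
      | succ s' =>
        rw [lshape_succ] at hc
        cases r with
        | zero =>
          rw [resL_succ]
          have h := hge s' c hc
          have h0 : resL T 0 c = 0 := rfl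
          omega
        | succ s =>
          rw [resL_succ, resL_succ]
          exact hT.2.2.2 (s + 1) (s' + 1) c hrr (by rw [shape_succ]; exact hc)
  · intro r c hc
    cases r with
    | zero => simp [lshape] at hc
    | succ s =>
      rw [lshape_succ] at hc
      rw [resL_succ]
      have hsl : s < l := by
        by_contra hcon
        have := hzero s (by omega)
        omega
      have hmem := hle (s + 1) (by omega) c (by rw [shape_succ]; exact hc)
      rw [Finset.mem_Icc] at hmem
      exact ⟨hge s c hc, hmem.2⟩

lemma filter_le_card_iff (g : ℕ → ℕ) (n : ℕ)
    (mono : ∀ a b, a ≤ b → b < n → g a ≤ g b) {c : ℕ} (hc : c < n) (v : ℕ) :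
    c < ((range n).filter fun x => g x ≤ v).card ↔ g c ≤ v := by
  classical
  constructor
  · intro h
    by_contra hv
    push_neg at hv
    have hsub : ((range n).filter fun x => g x ≤ v) ⊆ range c := by
      intro x hx
      rw [Finset.mem_filter, Finset.mem_range] at hx
      rw [Finset.mem_range]
      by_contra hcx
      push_neg at hcx
      have := mono c x hcx hx.1
      omega
    have := Finset.card_le_card hsub
    rw [Finset.card_range] at this
    omega
  · intro h
    have hsub : range (c + 1) ⊆ (range n).filter fun x => g x ≤ v := by
      intro x hx
      rw [Finset.mem_range] at hx
      rw [Finset.mem_filter, Finset.mem_range]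
      exact ⟨by omega, le_trans (mono x c (by omega) hc) h⟩
    have := Finset.card_le_card hsub
    rw [Finset.card_range] at this
    omega

lemma recT_resL (hd : 2 ≤ d) (hanti : Antitone lam)
    (hzero : ∀ i, l ≤ i → lam i = 0) (hk : lam 0 ≤ k)
    (hfirst : lam 0 + ∑ i ∈ Finset.range l, lam i ≤ k * d)
    (hT : IsSSYT (shape k d l lam) T)
    (hcnt : ∀ i, 1 ≤ i → i ≤ d →
      (∑ r ∈ Finset.range (l + 1),
        ((Finset.range (shape k d l lam r)).filter fun c => T r c = i).card) = k) :
    recT k d l lam (resL T) = T := by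
  classical
  have hd1 : 1 ≤ d := by omega
  set L := resL T with hLdef
  have hLow : Lower d l lam L := resL_lower hd hanti hzero hfirst hT hcnt
  funext r c
  cases r with
  | succ s => rw [recT_succ, hLdef, resL_succ]
  | zero =>
    by_cases hc : c < k * d - ∑ i ∈ Finset.range l, lam i
    · rw [recT_zero_lt hc]
      have hrow : ∀ i, 1 ≤ i → i ≤ d →
          ((range (k * d - ∑ i ∈ Finset.range l, lam i)).filter
            fun x => T 0 x = i).card + mm l lam L i = k := by
        intro i h1 h2
        have hc2 := hcnt i h1 h2
        rw [Finset.sum_range_succ'] at hc2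
        have ht : ∑ r ∈ range l,
            ((range (shape k d l lam (r + 1))).filter fun c => T (r + 1) c = i).card
              = mm l lam L i := by
          unfold mm
          refine Finset.sum_congr rfl fun r _ => ?_
          rw [shape_succ, hLdef]
          simp only [resL_succ]
        rw [ht, shape_zero] at hc2
        omega
      have hNv : ∀ v, 1 ≤ v → v ≤ d → NN k l lam L v
          = ((range (k * d - ∑ i ∈ Finset.range l, lam i)).filter
              fun x => T 0 x ≤ v).card := by
        intro v h1 h2
        have e1 : NN k l lam L v = ∑ i ∈ Icc 1 v,
            ((range (k * d - ∑ i ∈ Finset.range l, lam i)).filter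
              fun x => T 0 x = i).card := by
          unfold NN
          refine Finset.sum_congr rfl fun i hi => ?_
          rw [Finset.mem_Icc] at hi
          have := hrow i hi.1 (le_trans hi.2 h2)
          omega
        rw [e1, ← card_filter_mem]
        congr 1
        ext x
        simp only [Finset.mem_filter, Finset.mem_range, Finset.mem_Icc]
        constructor
        · rintro ⟨hx, hm⟩; exact ⟨hx, hm.2⟩
        · rintro ⟨hx, hm⟩
          exact ⟨hx, hT.1 0 x (by rw [shape_zero]; exact hx), hm⟩
      have hmono : ∀ a b, a ≤ b → b < k * d - ∑ i ∈ Finset.range l, lam i → T 0 a ≤ T 0 b :=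
        fun a b hab hb => hT.2.2.1 0 a b hab (by rw [shape_zero]; exact hb)
      have hT0 := entries_le hd hfirst hT hcnt 0 (by omega) c (by rw [shape_zero]; exact hc)
      rw [Finset.mem_Icc] at hT0
      have hNdL : NN k l lam L d = k * d - ∑ i ∈ Finset.range l, lam i :=
        NN_d hanti hLow hk
      have hcd : c < NN k l lam L d := by rw [hNdL]; exact hc
      apply le_antisymm
      · apply row0_le hT0.1
        rw [hNv (T 0 c) hT0.1 hT0.2]
        exact (filter_le_card_iff _ _ hmono hc _).mpr le_rfl
      · have hmem := row0_mem hd1 hcd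
        have hled : row0 k l lam L c ≤ d := row0_le hd1 hcd
        refine (filter_le_card_iff _ _ hmono hc (row0 k l lam L c)).mp ?_
        rw [← hNv _ hmem.1 hled]
        exact hmem.2
    · rw [recT_zero_ge hc]
      exact (hT.2.1 0 c (by rw [shape_zero]; omega)).symm

end fwd

section rt2

variable {d l k : ℕ} {lam : ℕ → ℕ} {L : ℕ → ℕ → ℕ}

lemma resL_recT (hL : Lower d l lam L) : resL (recT k d l lam L) = L := by
  funext r c
  cases r with
  | zero =>
    rw [resL_zero]
    exact (hL.1.2.1 0 c (by simp [lshape])).symm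
  | succ s => rw [resL_succ, recT_succ]

end rt2

/-- the key equivalence -/
noncomputable def equivFull (k d l : ℕ) (lam : ℕ → ℕ) (hd : 2 ≤ d)
    (hanti : Antitone lam) (hzero : ∀ i, l ≤ i → lam i = 0)
    (hk : lam 0 ≤ k)
    (hfirst : lam 0 + ∑ i ∈ Finset.range l, lam i ≤ k * d) :
    {T : ℕ → ℕ → ℕ // IsSSYT (shape k d l lam) T ∧
      ∀ i, 1 ≤ i → i ≤ d →
        (∑ r ∈ Finset.range (l + 1),
          ((Finset.range (shape k d l lam r)).filter fun c => T r c = i).card) = k}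
    ≃ {L : ℕ → ℕ → ℕ // Lower d l lam L} where
  toFun T := ⟨resL T.1, resL_lower hd hanti hzero hfirst T.2.1 T.2.2⟩
  invFun L := ⟨recT k d l lam L.1,
    recT_isSSYT hd hanti hk hfirst L.2,
    recT_content hd hanti hk hfirst L.2⟩
  left_inv T := Subtype.ext (recT_resL hd hanti hzero hk hfirst T.2.1 T.2.2)
  right_inv L := Subtype.ext (resL_recT L.2)

end Stmt8


/-- Section 2.2, stability of the multiplicity `s_{k,d}(λ)`: for `d ≥ 2` and any `k, k'`
with `k, k' ≥ λ_1`, `kd − |λ| ≥ λ_1` and `k'd − |λ| ≥ λ_1`, the number of semistandard Young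
tableaux of shape `(kd − |λ|, λ_1, …, λ_l)` in which each value `i ∈ {1,…,d}` occurs exactly
`k` times equals the corresponding number for `k'`; here `λ` is the partition encoded by the
antitone function `lam`, with exactly `l` nonzero parts.  By Pieri's rule these numbers are
the multiplicities `s_{k,d}(λ)` of `S_{(kd−|λ|,λ)}V` inside `(S^k V)^{⊗d}`, so `s_{k,d}(λ)`
is constant for `k ≥ λ_1`. -/
theorem stmt_8 (k k' d l : ℕ) (hd : 2 ≤ d)
    (lam : ℕ → ℕ) (hanti : Antitone lam)
    (hzero : ∀ i, l ≤ i → lam i = 0) (hpos : ∀ i, i < l → 0 < lam i)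
    (hk : lam 0 ≤ k) (hk' : lam 0 ≤ k')
    (hfirst : lam 0 + ∑ i ∈ Finset.range l, lam i ≤ k * d)
    (hfirst' : lam 0 + ∑ i ∈ Finset.range l, lam i ≤ k' * d) :
    Nat.card {T : ℕ → ℕ → ℕ // IsSSYT (shape k d l lam) T ∧
      ∀ i, 1 ≤ i → i ≤ d →
        (∑ r ∈ Finset.range (l + 1),
          ((Finset.range (shape k d l lam r)).filter fun c => T r c = i).card) = k} =
    Nat.card {T : ℕ → ℕ → ℕ // IsSSYT (shape k' d l lam) T ∧
      ∀ i, 1 ≤ i → i ≤ d →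
        (∑ r ∈ Finset.range (l + 1),
          ((Finset.range (shape k' d l lam r)).filter fun c => T r c = i).card) = k'} := by
  exact Nat.card_congr ((Stmt8.equivFull k d l lam hd hanti hzero hk hfirst).trans
    (Stmt8.equivFull k' d l lam hd hanti hzero hk' hfirst').symm)
end

section
/- Let n be a positive integer and σ a permutation of {1,…,n} with the property that for every j ∈ {1,…,n}, if σ(j) is odd then j < n and σ(j+1) = σ(j) + 1 (σ is 'paired'). Then every j with σ(j) odd is itself odd, and the sign of σ equals +1. -/
/-- A permutation `σ` of `{1,…,n}` (realized as `Equiv.Perm (Fin n)`, where `j : Fin n`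
represents the integer `j+1 ∈ {1,…,n}`) is *paired* if whenever the value `σ(j)` is odd,
the index `j+1` is still in `{1,…,n}` and `σ(j+1) = σ(j)+1`.  Then every `j` with `σ(j)` odd
is itself odd, and `sgn σ = 1`. -/
theorem stmt_10 (n : ℕ) (hn : 0 < n) (σ : Equiv.Perm (Fin n))
    (hpaired : ∀ j : Fin n, Odd ((σ j : ℕ) + 1) →
      ∃ hj : (j : ℕ) + 1 < n, ((σ ⟨(j : ℕ) + 1, hj⟩ : Fin n) : ℕ) + 1 = ((σ j : ℕ) + 1) + 1) :
    (∀ j : Fin n, Odd ((σ j : ℕ) + 1) → Odd ((j : ℕ) + 1)) ∧ Equiv.Perm.sign σ = 1 := by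
  -- restate the pairing hypothesis with `Even`
  have hp : ∀ j : Fin n, Even (σ j : ℕ) →
      ∃ hj : (j : ℕ) + 1 < n, ((σ ⟨(j : ℕ) + 1, hj⟩ : Fin n) : ℕ) = (σ j : ℕ) + 1 := by
    intro j h
    obtain ⟨hj, he⟩ := hpaired j (by simpa [Nat.odd_add_one, Nat.not_odd_iff_even] using h)
    exact ⟨hj, by omega⟩
  -- backward fact : an odd value position has an even-value predecessor
  have hB : ∀ j : Fin n, ¬ Even (σ j : ℕ) →
      ∃ j' : Fin n, (j' : ℕ) + 1 = (j : ℕ) ∧ Even (σ j' : ℕ) := by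
    intro j hodd
    have h1 : 1 ≤ (σ j : ℕ) := by
      rcases Nat.eq_zero_or_pos (σ j : ℕ) with h | h
      · exact absurd (h ▸ Even.zero) hodd
      · exact h
    set v : Fin n := ⟨(σ j : ℕ) - 1, by omega⟩ with hv
    set j' : Fin n := σ.symm v with hj'
    have hσj' : σ j' = v := Equiv.apply_symm_apply σ v
    have hev : Even (σ j' : ℕ) := by
      rw [hσj']
      simp only [hv]
      rcases Nat.even_or_odd (σ j : ℕ) with h | h
      · exact absurd h hodd
      · obtain ⟨t, ht⟩ := h; exact ⟨t, by omega⟩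
    obtain ⟨hjlt, heq⟩ := hp j' hev
    have hval : (σ ⟨(j' : ℕ) + 1, hjlt⟩ : ℕ) = (σ j : ℕ) := by
      rw [heq, hσj']; simp only [hv]; omega
    have : (⟨(j' : ℕ) + 1, hjlt⟩ : Fin n) = j := σ.injective (Fin.ext hval)
    exact ⟨j', by rw [← this], hev⟩
  -- parity lemma
  have hA : ∀ k : ℕ, ∀ j : Fin n, (j : ℕ) = k → (Even (σ j : ℕ) ↔ Even (j : ℕ)) := by
    intro k
    induction k using Nat.strong_induction_on with
    | _ k IH =>
      intro j hjk
      match k, hjk with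
      | 0, hjk =>
        have he : Even (σ j : ℕ) := by
          by_contra h
          obtain ⟨j', hj', _⟩ := hB j h
          omega
        simp [hjk, he]
      | (k+1), hjk =>
        have hkn : k < n := by have := j.2; omega
        set jp : Fin n := ⟨k, hkn⟩ with hjp
        have IHk := IH k (by omega) jp rfl
        by_cases hk : Even k
        · have hev : Even (σ jp : ℕ) := IHk.mpr hk
          obtain ⟨hjlt, heq⟩ := hp jp hev
          have hjeq : (⟨(jp : ℕ) + 1, hjlt⟩ : Fin n) = j := Fin.ext (by simp [hjp, hjk])
          have : (σ j : ℕ) = (σ jp : ℕ) + 1 := by rw [← hjeq]; exact heq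
          constructor
          · intro h; exact absurd h (by rw [this]; simpa [Nat.even_add_one] using hev)
          · intro h; exact absurd h (by rw [hjk]; simpa [Nat.even_add_one] using hk)
        · have hodd : ¬ Even (σ jp : ℕ) := fun h => hk (IHk.mp h)
          have he : Even (σ j : ℕ) := by
            by_contra h
            obtain ⟨j', hj', hev'⟩ := hB j h
            have : j' = jp := Fin.ext (by simp [hjp]; omega)
            exact hodd (this ▸ hev')
          have : Even (k + 1) := by simpa [Nat.even_add_one] using hk
          simp [hjk, he, this]
  have hA' : ∀ j : Fin n, Even (σ j : ℕ) ↔ Even (j : ℕ) := fun j => hA (j : ℕ) j rfl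
  constructor
  · intro j h
    have : Even (σ j : ℕ) := by simpa [Nat.odd_add_one, Nat.not_odd_iff_even] using h
    simpa [Nat.odd_add_one, Nat.not_odd_iff_even] using (hA' j).mp this
  -- n is even
  · have hnE : Even n := by
      by_contra h
      obtain ⟨t, ht⟩ := Nat.not_even_iff_odd.mp h
      set v : Fin n := ⟨n - 1, by omega⟩ with hv
      set j : Fin n := σ.symm v with hj
      have hσj : σ j = v := Equiv.apply_symm_apply σ v
      have hev : Even (σ j : ℕ) := by rw [hσj]; exact ⟨t, by simp [hv]; omega⟩
      obtain ⟨hjlt, heq⟩ := hp j hev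
      have := (σ ⟨(j : ℕ) + 1, hjlt⟩).2
      rw [heq, hσj] at this
      simp [hv] at this
      omega
    obtain ⟨m, hm⟩ := hnE
    have h2 : n = m * 2 := by omega
    -- the induced permutation on pairs
    have hbound : ∀ k : Fin m, 2 * (k : ℕ) < n := by intro k; have := k.2; omega
    set f : Fin m → Fin m := fun k =>
      ⟨(σ ⟨2 * (k : ℕ), hbound k⟩ : ℕ) / 2, by
        have := (σ ⟨2 * (k : ℕ), hbound k⟩).2; omega⟩ with hf
    have hfspec : ∀ k : Fin m, 2 * (f k : ℕ) = (σ ⟨2 * (k : ℕ), hbound k⟩ : ℕ) := by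
      intro k
      have hev : Even (σ ⟨2 * (k : ℕ), hbound k⟩ : ℕ) :=
        (hA' _).mpr ⟨(k : ℕ), by ring_nf⟩
      obtain ⟨t, ht⟩ := hev
      simp [hf]; omega
    have hinj : Function.Injective f := by
      intro k k' h
      have h2' : (σ ⟨2 * (k : ℕ), hbound k⟩ : ℕ) = (σ ⟨2 * (k' : ℕ), hbound k'⟩ : ℕ) := by
        rw [← hfspec k, ← hfspec k', h]
      have := σ.injective (Fin.ext h2')
      have : 2 * (k : ℕ) = 2 * (k' : ℕ) := congrArg Fin.val this
      exact Fin.ext (by omega)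
    set π : Equiv.Perm (Fin m) := Equiv.ofBijective f (Finite.injective_iff_bijective.mp hinj)
      with hπ
    have hπapp : ∀ k, π k = f k := fun k => rfl
    set e : Fin m × Fin 2 ≃ Fin n := finProdFinEquiv.trans (finCongr h2.symm) with he
    have heapp : ∀ k : Fin m, ∀ r : Fin 2, (e (k, r) : ℕ) = (r : ℕ) + 2 * (k : ℕ) := by
      intro k r; simp [he, finProdFinEquiv]
    set g : Equiv.Perm (Fin m × Fin 2) := Equiv.prodCongrLeft (fun _ : Fin 2 => π) with hg
    have hmain : ∀ (k : Fin m) (r : Fin 2), σ (e (k, r)) = e (f k, r) := by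
      intro k r
      apply Fin.ext
      rw [heapp]
      have hlt : (r : ℕ) + 2 * (k : ℕ) < n := by have := k.2; have := r.2; omega
      have hekr : e (k, r) = ⟨(r : ℕ) + 2 * (k : ℕ), hlt⟩ := Fin.ext (heapp k r)
      rw [hekr]
      have hr2 := r.2
      have hr01 : (r : ℕ) = 0 ∨ (r : ℕ) = 1 := by omega
      rcases hr01 with hr | hr
      · have harg : (⟨(r : ℕ) + 2 * (k : ℕ), hlt⟩ : Fin n) = ⟨2 * (k : ℕ), hbound k⟩ :=
          Fin.ext (by simp [hr])
        rw [harg]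
        have := hfspec k
        omega
      · obtain ⟨hjlt, heq⟩ := hp ⟨2 * (k : ℕ), hbound k⟩
          ((hA' _).mpr ⟨(k : ℕ), by ring_nf⟩)
        have harg : (⟨(r : ℕ) + 2 * (k : ℕ), hlt⟩ : Fin n) =
            ⟨((⟨2 * (k : ℕ), hbound k⟩ : Fin n) : ℕ) + 1, hjlt⟩ :=
          Fin.ext (by simp [hr]; omega)
        rw [harg]
        have := hfspec k
        omega
    have hsign : Equiv.Perm.sign g = Equiv.Perm.sign σ := by
      apply Equiv.Perm.sign_eq_sign_of_equiv g σ e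
      rintro ⟨k, r⟩
      have hgx : g (k, r) = (f k, r) := rfl
      rw [hgx]
      exact (hmain k r).symm
    rw [← hsign, hg, Equiv.Perm.sign_prodCongrLeft]
    simp [Fin.prod_univ_two, Int.units_mul_self]
end
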